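/- Let (a,b) be a matching pair in L^∞(ℝ) with subordinated pair (c,d), and suppose the Wiener–Hopf operators W(c) and W(d) are invertible on L²(ℝ⁺). Then W(a)+H(b) is invertible on L²(ℝ⁺) and its inverse is given by (W(a)+H(b))⁻¹ = (I − H(c̃))∘W(c)⁻¹∘W(ã⁻¹)∘W(d)⁻¹ + H(a⁻¹)∘W(d)⁻¹. -/

import Mathlib

open MeasureTheory Complex Filter Set

noncomputable section

namespace WienerHopf

/-- The space `L²(ℝ;ℂ)`. -/
abbrev L2 : Type := Lp ℂ 2 (volume : Measure ℝ)

open Classical in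
/-- Multiplication by a function `a : ℝ → ℂ`, as a bounded operator on `L²(ℝ)`.
(It is defined to be `0` in the degenerate case where `a` is not essentially bounded.) -/
def mul (a : ℝ → ℂ) : L2 →L[ℂ] L2 :=
  if h : MemLp a ⊤ (volume : Measure ℝ) then
    LinearMap.mkContinuous
      { toFun := fun f => ((Lp.memLp f).smul (r := 2) h).toLp (a • (f : ℝ → ℂ))
        map_add' := by
          intro f g
          rw [← MemLp.toLp_add]
          apply Lp.ext
          filter_upwards [MemLp.coeFn_toLp ((Lp.memLp (f + g)).smul (r := 2) h),
            MemLp.coeFn_toLp (((Lp.memLp f).smul (r := 2) h).add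
              ((Lp.memLp g).smul (r := 2) h)),
            Lp.coeFn_add f g] with t h1 h2 h3
          rw [h1, h2]
          simp only [Pi.smul_apply, smul_eq_mul, Pi.mul_apply, Pi.add_apply]
          rw [h3]
          simp [Pi.add_apply, mul_add]
        map_smul' := by
          intro m f
          simp only [RingHom.id_apply]
          rw [← MemLp.toLp_const_smul]
          apply Lp.ext
          filter_upwards [MemLp.coeFn_toLp ((Lp.memLp (m • f)).smul (r := 2) h),
            MemLp.coeFn_toLp (((Lp.memLp f).smul (r := 2) h).const_smul m),
            Lp.coeFn_smul m f] with t h1 h2 h3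
          rw [h1, h2]
          simp only [Pi.smul_apply, smul_eq_mul, Pi.mul_apply]
          rw [h3]
          simp only [Pi.smul_apply, smul_eq_mul]
          ring
        }
      (eLpNorm a ⊤ (volume : Measure ℝ)).toReal
      (by
        intro f
        simp only [LinearMap.coe_mk, AddHom.coe_mk]
        rw [Lp.norm_toLp, Lp.norm_def]
        have hle := eLpNorm_smul_le_mul_eLpNorm (Lp.aestronglyMeasurable f) h.1
          (p := ⊤) (q := 2) (r := 2)
        calc (eLpNorm (a • (f : ℝ → ℂ)) 2 (volume : Measure ℝ)).toReal
            ≤ (eLpNorm a ⊤ (volume : Measure ℝ) * eLpNorm (f : ℝ → ℂ) 2 volume).toReal := by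
              apply ENNReal.toReal_mono _ hle
              exact ENNReal.mul_ne_top h.2.ne (Lp.eLpNorm_lt_top f).ne
          _ = (eLpNorm a ⊤ (volume : Measure ℝ)).toReal *
              (eLpNorm (f : ℝ → ℂ) 2 (volume : Measure ℝ)).toReal := ENNReal.toReal_mul)
  else 0

theorem mul_coeFn {a : ℝ → ℂ} (h : MemLp a ⊤ (volume : Measure ℝ)) (f : L2) :
    (mul a f : ℝ → ℂ) =ᵐ[volume] fun t => a t * f t := by
  rw [mul, dif_pos h]
  show ⇑(((Lp.memLp f).smul (r := 2) h).toLp (a • (f : ℝ → ℂ))) =ᵐ[volume]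
    fun t => a t * f t
  exact (MemLp.coeFn_toLp _).trans
    (Eventually.of_forall fun t => by simp [Pi.smul_apply])

/-- `(-t)`-reflection is measure preserving. -/
theorem negMP : MeasurePreserving (fun t : ℝ => -t) volume volume :=
  Measure.measurePreserving_neg (volume : Measure ℝ)

/-- The reflection operator `(Jφ)(t) = φ(-t)` on `L²(ℝ)`. -/
def reflect : L2 →L[ℂ] L2 :=
  LinearMap.mkContinuous
    { toFun := ⇑(Lp.compMeasurePreserving (fun t : ℝ => -t) negMP)
      map_add' := fun f g => map_add _ f g
      map_smul' := by
        intro m g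
        simp only [RingHom.id_apply]
        apply Lp.ext
        filter_upwards [Lp.coeFn_compMeasurePreserving (f := fun t : ℝ => -t) (m • g) negMP,
          Lp.coeFn_smul m (Lp.compMeasurePreserving (fun t : ℝ => -t) negMP g),
          Lp.coeFn_compMeasurePreserving (f := fun t : ℝ => -t) g negMP,
          negMP.quasiMeasurePreserving.ae_eq_comp (Lp.coeFn_smul m g)] with t h1 h2 h3 h4
        rw [h1, h2, h4]
        simp only [Function.comp_apply, Pi.smul_apply, smul_eq_mul]
        rw [h3]
        simp only [Function.comp_apply]
      }
    1
    (by
      intro g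
      rw [one_mul]
      exact le_of_eq (Lp.norm_compMeasurePreserving g _))

theorem reflect_coeFn (g : L2) :
    (reflect g : ℝ → ℂ) =ᵐ[volume] fun t => g (-t) :=
  Lp.coeFn_compMeasurePreserving (f := fun t : ℝ => -t) g negMP

/-- The indicator function of `(0,∞)`. -/
def chiPlus : ℝ → ℂ := Set.indicator (Set.Ioi (0 : ℝ)) (fun _ => 1)

theorem chiPlus_memℒp : MemLp chiPlus ⊤ (volume : Measure ℝ) :=
  (memLp_top_const (1 : ℂ)).indicator measurableSet_Ioi

/-- The subspace of `L²(ℝ)` consisting of functions vanishing a.e. on `(-∞,0)`;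
it is identified with `L²(ℝ⁺)`. -/
def posSubspace : Submodule ℂ L2 where
  carrier := {f : L2 | ∀ᵐ t : ℝ ∂volume, t < 0 → (f : ℝ → ℂ) t = 0}
  zero_mem' := by
    filter_upwards [Lp.coeFn_zero ℂ 2 (volume : Measure ℝ)] with t ht _
    simp [ht]
  add_mem' := by
    intro f g hf hg
    filter_upwards [hf, hg, Lp.coeFn_add f g] with t h1 h2 h3 hlt
    rw [h3]
    simp [Pi.add_apply, h1 hlt, h2 hlt]
  smul_mem' := by
    intro m f hf
    filter_upwards [hf, Lp.coeFn_smul m f] with t h1 h2 hlt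
    rw [h2]
    simp [Pi.smul_apply, h1 hlt]

/-- `L²(ℝ⁺)`, realized as the subspace of `L²(ℝ)` of functions vanishing a.e. on `(-∞,0)`. -/
abbrev Lp2Plus : Type := ↥posSubspace

theorem chiPlus_mul_mem (g : L2) : mul chiPlus g ∈ posSubspace := by
  filter_upwards [mul_coeFn chiPlus_memℒp g] with t ht hlt
  rw [ht, chiPlus, Set.indicator_of_notMem (by simpa using hlt.le), zero_mul]

/-- Compression of an operator on `L²(ℝ)` to the subspace `L²(ℝ⁺)`:
`φ ↦ χ₊ ⬝ (T φ)`. -/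
def compress (T : L2 →L[ℂ] L2) : Lp2Plus →L[ℂ] Lp2Plus :=
  LinearMap.mkContinuous
    { toFun := fun φ => ⟨mul chiPlus (T φ.val), chiPlus_mul_mem _⟩
      map_add' := by intro φ ψ; apply Subtype.ext; simp
      map_smul' := by intro m φ; apply Subtype.ext; simp }
    ‖(mul chiPlus).comp T‖
    (by intro φ; exact ((mul chiPlus).comp T).le_opNorm φ.val)

theorem compress_coe (T : L2 →L[ℂ] L2) (φ : Lp2Plus) :
    (compress T φ : L2) = mul chiPlus (T φ.val) := rfl

/-- An abstract realization of the Fourier transform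
`(𝓕φ)(ξ) = ∫ e^{iξx} φ(x) dx` on `L²(ℝ)` (together with its inverse
`(𝓕⁻¹ψ)(x) = (2π)⁻¹ ∫ e^{-iξx} ψ(ξ) dξ`): a continuous linear bijection of `L²(ℝ)`
that is given by the above integral formulas on integrable functions.  By density
of `L¹ ∩ L²` in `L²`, these properties determine the operator uniquely, and by the
Fourier–Plancherel theory such an operator exists. -/
structure FourierL2 where
  equiv : L2 ≃L[ℂ] L2
  forward : ∀ φ : L2, Integrable (φ : ℝ → ℂ) volume →
      (equiv φ : ℝ → ℂ) =ᵐ[volume]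
        fun ξ : ℝ => ∫ x : ℝ, Complex.exp (Complex.I * ξ * x) * φ x
  inverse : ∀ ψ : L2, Integrable (ψ : ℝ → ℂ) volume →
      (equiv.symm ψ : ℝ → ℂ) =ᵐ[volume]
        fun x : ℝ => (2 * Real.pi : ℂ)⁻¹ * ∫ ξ : ℝ, Complex.exp (-(Complex.I * ξ * x)) * ψ ξ

/-- `W⁰(a) = 𝓕⁻¹ M_a 𝓕`, the convolution (Fourier multiplier) operator on `L²(ℝ)`. -/
def W0 (F : FourierL2) (a : ℝ → ℂ) : L2 →L[ℂ] L2 :=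
  (F.equiv.symm : L2 →L[ℂ] L2).comp ((mul a).comp (F.equiv : L2 →L[ℂ] L2))

/-- The Wiener–Hopf operator `W(a) = χ₊ W⁰(a)` on `L²(ℝ⁺)`. -/
def W (F : FourierL2) (a : ℝ → ℂ) : Lp2Plus →L[ℂ] Lp2Plus :=
  compress (W0 F a)

/-- The Hankel operator `H(b) = χ₊ W⁰(b) J` on `L²(ℝ⁺)`. -/
def H (F : FourierL2) (b : ℝ → ℂ) : Lp2Plus →L[ℂ] Lp2Plus :=
  compress ((W0 F b).comp reflect)

/-- `a` is invertible in the Banach algebra `L^∞(ℝ)`: `a ∈ L^∞`, `a ≠ 0` a.e.,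
and the pointwise inverse `a⁻¹` again belongs to `L^∞`. -/
def InvertibleLinf (a : ℝ → ℂ) : Prop :=
  MemLp a ⊤ (volume : Measure ℝ) ∧ (∀ᵐ t : ℝ ∂volume, a t ≠ 0) ∧
    MemLp (fun t => (a t)⁻¹) ⊤ (volume : Measure ℝ)

/-- `(a,b)` is a matching pair: `a, b` are invertible in `L^∞(ℝ)` and
`a(t)a(-t) = b(t)b(-t)` for a.e. `t`. -/
def MatchingPair (a b : ℝ → ℂ) : Prop :=
  InvertibleLinf a ∧ InvertibleLinf b ∧
    ∀ᵐ t : ℝ ∂volume, a t * a (-t) = b t * b (-t)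


/-! ### Auxiliary lemmas -/

section Aux

theorem ae_neg {p : ℝ → Prop} (h : ∀ᵐ t : ℝ ∂(volume : Measure ℝ), p t) :
    ∀ᵐ t : ℝ ∂(volume : Measure ℝ), p (-t) :=
  negMP.quasiMeasurePreserving.ae h

theorem memℒp_top_reflect {a : ℝ → ℂ} (h : MemLp a ⊤ (volume : Measure ℝ)) :
    MemLp (fun t => a (-t)) ⊤ (volume : Measure ℝ) :=
  h.comp_measurePreserving negMP

theorem memℒp_top_mul {a b : ℝ → ℂ} (ha : MemLp a ⊤ (volume : Measure ℝ))
    (hb : MemLp b ⊤ (volume : Measure ℝ)) :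
    MemLp (fun t => a t * b t) ⊤ (volume : Measure ℝ) := by
  have hs : (fun t => a t * b t) = a • b := rfl
  rw [hs]
  exact hb.smul (r := ⊤) ha

/-- `mul` only depends on the a.e. class of the symbol. -/
theorem mul_congr {a b : ℝ → ℂ} (h : a =ᵐ[(volume : Measure ℝ)] b) :
    mul a = mul b := by
  by_cases ha : MemLp a ⊤ (volume : Measure ℝ)
  · have hb : MemLp b ⊤ (volume : Measure ℝ) := ha.ae_eq h
    ext f
    filter_upwards [mul_coeFn ha f, mul_coeFn hb f, h] with t h1 h2 h3
    rw [h1, h2, h3]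
  · have hb : ¬ MemLp b ⊤ (volume : Measure ℝ) := fun hb => ha (hb.ae_eq h.symm)
    rw [mul, dif_neg ha, mul, dif_neg hb]

theorem mul_one_eq_id : mul (fun _ : ℝ => (1 : ℂ)) = ContinuousLinearMap.id ℂ L2 := by
  ext f
  filter_upwards [mul_coeFn (memLp_top_const (1 : ℂ)) f] with t h1
  rw [h1]
  simp

theorem mul_comp {a b : ℝ → ℂ} (ha : MemLp a ⊤ (volume : Measure ℝ))
    (hb : MemLp b ⊤ (volume : Measure ℝ)) :
    (mul a).comp (mul b) = mul (fun t => a t * b t) := by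
  ext f
  have h1 := mul_coeFn ha (mul b f)
  have h2 := mul_coeFn hb f
  have h3 := mul_coeFn (memℒp_top_mul ha hb) f
  filter_upwards [h1, h2, h3] with t h1 h2 h3
  simp only [ContinuousLinearMap.comp_apply]
  rw [h1, h2, h3]
  ring

theorem mul_add_mul {a b : ℝ → ℂ} (ha : MemLp a ⊤ (volume : Measure ℝ))
    (hb : MemLp b ⊤ (volume : Measure ℝ)) :
    mul a + mul b = mul (fun t => a t + b t) := by
  ext f
  have h3 := mul_coeFn (a := fun t => a t + b t) (ha.add hb) f
  filter_upwards [mul_coeFn ha f, mul_coeFn hb f, h3,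
    Lp.coeFn_add (mul a f) (mul b f)] with t h1 h2 h3 h4
  simp only [ContinuousLinearMap.add_apply]
  rw [h4]
  simp only [Pi.add_apply]
  rw [h1, h2, h3]
  ring

theorem reflect_reflect_apply (f : L2) : reflect (reflect f) = f := by
  apply Lp.ext
  filter_upwards [reflect_coeFn (reflect f),
    negMP.quasiMeasurePreserving.ae_eq (reflect_coeFn f)] with t h1 h2
  rw [h1]
  have h2' : (reflect f : ℝ → ℂ) (-t) = f (-(-t)) := h2
  rw [h2', neg_neg]

theorem reflect_comp_reflect : reflect.comp reflect = ContinuousLinearMap.id ℂ L2 :=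
  ContinuousLinearMap.ext reflect_reflect_apply

theorem reflect_comp_mul {a : ℝ → ℂ} (ha : MemLp a ⊤ (volume : Measure ℝ)) :
    reflect.comp (mul a) = (mul (fun t => a (-t))).comp reflect := by
  ext f
  have h1 := reflect_coeFn (mul a f)
  have h2 := negMP.quasiMeasurePreserving.ae_eq (mul_coeFn ha f)
  have h3 := mul_coeFn (memℒp_top_reflect ha) (reflect f)
  have h4 := reflect_coeFn f
  filter_upwards [h1, h2, h3, h4] with t h1 h2 h3 h4
  simp only [ContinuousLinearMap.comp_apply]
  rw [h1, h3, h4]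
  exact h2

theorem integrable_reflect {f : L2} (h : Integrable (f : ℝ → ℂ) (volume : Measure ℝ)) :
    Integrable (reflect f : ℝ → ℂ) (volume : Measure ℝ) := by
  have : Integrable ((f : ℝ → ℂ) ∘ (fun t : ℝ => -t)) (volume : Measure ℝ) :=
    memLp_one_iff_integrable.mp
      ((memLp_one_iff_integrable.mpr h).comp_measurePreserving negMP)
  exact this.congr (reflect_coeFn f).symm

theorem fourier_reflect_apply (F : FourierL2) (f : L2) :
    F.equiv (reflect f) = reflect (F.equiv f) := by
  have hdense : DenseRange ((↑) : Lp.simpleFunc ℂ 2 (volume : Measure ℝ) → L2) :=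
    Lp.simpleFunc.denseRange (by norm_num)
  refine hdense.induction_on f ?_ ?_
  · exact isClosed_eq
      ((F.equiv.continuous).comp reflect.continuous)
      (reflect.continuous.comp F.equiv.continuous)
  · intro s
    set g : L2 := (s : L2) with hg
    have hint : Integrable (g : ℝ → ℂ) (volume : Measure ℝ) := by
      have h1 : Integrable (Lp.simpleFunc.toSimpleFunc s) (volume : Measure ℝ) := by
        rw [SimpleFunc.integrable_iff]
        exact (SimpleFunc.memLp_iff (p := 2) (by norm_num) (by norm_num)).mp
          (Lp.simpleFunc.memLp s)
      exact h1.congr (Lp.simpleFunc.toSimpleFunc_eq_toFun s)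
    have hintr : Integrable (reflect g : ℝ → ℂ) (volume : Measure ℝ) := integrable_reflect hint
    -- both sides are a.e. equal to `fun ξ => ∫ x, exp (I ξ (-x)) * g x`
    apply Lp.ext
    have hA : (F.equiv (reflect g) : ℝ → ℂ) =ᵐ[(volume : Measure ℝ)]
        fun ξ : ℝ => ∫ x : ℝ, Complex.exp (Complex.I * ξ * (-x)) * g x := by
      refine (F.forward (reflect g) hintr).trans (Eventually.of_forall fun ξ => ?_)
      beta_reduce
      have step1 : (∫ x : ℝ, Complex.exp (Complex.I * ξ * x) * (reflect g : ℝ → ℂ) x)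
          = ∫ x : ℝ, Complex.exp (Complex.I * ξ * x) * g (-x) := by
        refine integral_congr_ae ?_
        filter_upwards [reflect_coeFn g] with x hx
        rw [hx]
      rw [step1]
      have step2 : (∫ x : ℝ, Complex.exp (Complex.I * ξ * x) * g (-x))
          = ∫ x : ℝ, Complex.exp (Complex.I * ξ * (-x)) * g x := by
        have := negMP.integral_comp (MeasurableEquiv.neg ℝ).measurableEmbedding
          (fun y : ℝ => Complex.exp (Complex.I * ξ * (-y)) * g y)
        calc (∫ x : ℝ, Complex.exp (Complex.I * ξ * x) * g (-x))
            = ∫ x : ℝ, (fun y : ℝ => Complex.exp (Complex.I * ξ * (-y)) * g y) (-x) := by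
              congr 1; funext x; simp
          _ = ∫ x : ℝ, Complex.exp (Complex.I * ξ * (-x)) * g x := this
      rw [step2]
    have hB : (reflect (F.equiv g) : ℝ → ℂ) =ᵐ[(volume : Measure ℝ)]
        fun ξ : ℝ => ∫ x : ℝ, Complex.exp (Complex.I * ξ * (-x)) * g x := by
      have h1 := reflect_coeFn (F.equiv g)
      have h2 := negMP.quasiMeasurePreserving.ae_eq (F.forward g hint)
      filter_upwards [h1, h2] with ξ h1 h2
      rw [h1]
      have h2' : (F.equiv g : ℝ → ℂ) (-ξ)
          = ∫ x : ℝ, Complex.exp (Complex.I * (-ξ : ℝ) * x) * g x := h2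
      rw [h2']
      congr 1
      funext x
      congr 2
      push_cast
      ring
    exact hA.trans hB.symm

theorem fourier_symm_reflect_apply (F : FourierL2) (f : L2) :
    F.equiv.symm (reflect f) = reflect (F.equiv.symm f) := by
  have h := fourier_reflect_apply F (F.equiv.symm f)
  rw [F.equiv.apply_symm_apply] at h
  calc F.equiv.symm (reflect f) = F.equiv.symm (F.equiv (reflect (F.equiv.symm f))) := by rw [h]
    _ = reflect (F.equiv.symm f) := F.equiv.symm_apply_apply _

theorem W0_apply (F : FourierL2) (x : ℝ → ℂ) (f : L2) :
    W0 F x f = F.equiv.symm (mul x (F.equiv f)) := rfl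

theorem W0_congr (F : FourierL2) {x y : ℝ → ℂ} (h : x =ᵐ[(volume : Measure ℝ)] y) :
    W0 F x = W0 F y := by
  unfold W0
  rw [mul_congr h]

theorem W0_comp_apply (F : FourierL2) {x y : ℝ → ℂ} (hx : MemLp x ⊤ (volume : Measure ℝ))
    (hy : MemLp y ⊤ (volume : Measure ℝ)) (f : L2) :
    W0 F x (W0 F y f) = W0 F (fun t => x t * y t) f := by
  have h := ContinuousLinearMap.ext_iff.mp (mul_comp hx hy) (F.equiv f)
  simp only [ContinuousLinearMap.comp_apply] at h
  simp only [W0_apply, F.equiv.apply_symm_apply, h]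

theorem W0_one_apply (F : FourierL2) (f : L2) :
    W0 F (fun _ => (1 : ℂ)) f = f := by
  have h := ContinuousLinearMap.ext_iff.mp mul_one_eq_id (F.equiv f)
  simp only [ContinuousLinearMap.id_apply] at h
  rw [W0_apply, h, F.equiv.symm_apply_apply]

theorem reflect_mul_reflect_apply {x : ℝ → ℂ} (hx : MemLp x ⊤ (volume : Measure ℝ)) (v : L2) :
    reflect (mul x (reflect v)) = mul (fun t => x (-t)) v := by
  have h := ContinuousLinearMap.ext_iff.mp (reflect_comp_mul hx) (reflect v)
  simp only [ContinuousLinearMap.comp_apply] at h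
  rw [h, reflect_reflect_apply]

theorem W0_reflect_apply (F : FourierL2) {x : ℝ → ℂ} (hx : MemLp x ⊤ (volume : Measure ℝ))
    (f : L2) :
    W0 F (fun t => x (-t)) f = reflect (W0 F x (reflect f)) := by
  rw [W0_apply, W0_apply, fourier_reflect_apply, ← reflect_mul_reflect_apply hx (F.equiv f),
    fourier_symm_reflect_apply]

theorem reflect_W0_apply (F : FourierL2) {x : ℝ → ℂ} (hx : MemLp x ⊤ (volume : Measure ℝ))
    (f : L2) :
    reflect (W0 F x f) = W0 F (fun t => x (-t)) (reflect f) := by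
  rw [W0_reflect_apply F hx, reflect_reflect_apply]

theorem ae_ne_zero : ∀ᵐ t : ℝ ∂(volume : Measure ℝ), t ≠ 0 := by
  rw [ae_iff]
  have : {t : ℝ | ¬ t ≠ 0} = {(0 : ℝ)} := by ext t; simp
  rw [this]
  exact measure_singleton 0

theorem chiPlus_add_reflect :
    mul chiPlus + mul (fun t => chiPlus (-t)) = ContinuousLinearMap.id ℂ L2 := by
  rw [mul_add_mul chiPlus_memℒp (memℒp_top_reflect chiPlus_memℒp), ← mul_one_eq_id]
  apply mul_congr
  filter_upwards [ae_ne_zero] with t ht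
  rcases lt_or_gt_of_ne ht with h | h
  · have h1 : chiPlus t = 0 := Set.indicator_of_notMem (by simpa using h.le) _
    have h2 : chiPlus (-t) = 1 := Set.indicator_of_mem (by simpa using h) _
    simp [h1, h2]
  · have h1 : chiPlus t = 1 := Set.indicator_of_mem (by simpa using h) _
    have h2 : chiPlus (-t) = 0 := Set.indicator_of_notMem (by simpa using h.le) _
    simp [h1, h2]

theorem JPJ_apply (v : L2) :
    reflect (mul chiPlus (reflect v)) = v - mul chiPlus v := by
  rw [reflect_mul_reflect_apply chiPlus_memℒp]
  have h := ContinuousLinearMap.ext_iff.mp chiPlus_add_reflect v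
  simp only [ContinuousLinearMap.add_apply, ContinuousLinearMap.id_apply] at h
  rw [eq_sub_iff_add_eq, add_comm]
  exact h

theorem chiPlus_mul_of_mem {f : L2} (hf : f ∈ posSubspace) : mul chiPlus f = f := by
  apply Lp.ext
  filter_upwards [mul_coeFn chiPlus_memℒp f, hf, ae_ne_zero] with t h1 h2 h3
  rw [h1]
  rcases lt_or_gt_of_ne h3 with h | h
  · rw [h2 h, mul_zero]
  · rw [chiPlus, Set.indicator_of_mem (by simpa using h), one_mul]

theorem chiPlus_mul_reflect_of_mem {f : L2} (hf : f ∈ posSubspace) :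
    mul chiPlus (reflect f) = 0 := by
  apply Lp.ext
  have hf' : ∀ᵐ t : ℝ ∂(volume : Measure ℝ), -t < 0 → (f : ℝ → ℂ) (-t) = 0 :=
    ae_neg (p := fun t => t < 0 → (f : ℝ → ℂ) t = 0) hf
  filter_upwards [mul_coeFn chiPlus_memℒp (reflect f), reflect_coeFn f, hf',
    Lp.coeFn_zero ℂ 2 (volume : Measure ℝ)] with t h1 h2 h3 h4
  rw [h1, h2, h4, Pi.zero_apply]
  by_cases h : (0 : ℝ) < t
  · rw [h3 (by linarith), mul_zero]
  · rw [chiPlus, Set.indicator_of_notMem (by simpa using h), zero_mul]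

theorem reflect_mem_of_chiPlus_eq_zero {ψ : L2} (h : mul chiPlus ψ = 0) :
    reflect ψ ∈ posSubspace := by
  have h0 : (mul chiPlus ψ : ℝ → ℂ) =ᵐ[(volume : Measure ℝ)] 0 := by
    rw [h]; exact Lp.coeFn_zero ℂ 2 (volume : Measure ℝ)
  have hz : ∀ᵐ t : ℝ ∂(volume : Measure ℝ), 0 < t → (ψ : ℝ → ℂ) t = 0 := by
    filter_upwards [mul_coeFn chiPlus_memℒp ψ, h0] with t h1 h2 ht
    have := h1.symm.trans h2
    rwa [chiPlus, Set.indicator_of_mem (by simpa using ht), one_mul, Pi.zero_apply] at this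
  have hz' : ∀ᵐ t : ℝ ∂(volume : Measure ℝ), 0 < -t → (ψ : ℝ → ℂ) (-t) = 0 :=
    ae_neg (p := fun t => 0 < t → (ψ : ℝ → ℂ) t = 0) hz
  filter_upwards [reflect_coeFn ψ, hz'] with t h1 h2 ht
  rw [h1]
  exact h2 (by linarith)

theorem W_val (F : FourierL2) (x : ℝ → ℂ) (φ : Lp2Plus) :
    ((W F x φ : Lp2Plus) : L2) = mul chiPlus (W0 F x (φ : L2)) := rfl

theorem H_val (F : FourierL2) (x : ℝ → ℂ) (φ : Lp2Plus) :
    ((H F x φ : Lp2Plus) : L2) = mul chiPlus (W0 F x (reflect (φ : L2))) := rfl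

theorem W_congr (F : FourierL2) {x y : ℝ → ℂ} (h : x =ᵐ[(volume : Measure ℝ)] y) :
    W F x = W F y := by
  unfold W
  rw [W0_congr F h]

theorem H_congr (F : FourierL2) {x y : ℝ → ℂ} (h : x =ᵐ[(volume : Measure ℝ)] y) :
    H F x = H F y := by
  unfold H
  rw [W0_congr F h]

theorem W_one (F : FourierL2) : W F (fun _ => (1 : ℂ)) = 1 := by
  refine ContinuousLinearMap.ext fun φ => Subtype.ext ?_
  rw [W_val, W0_one_apply, chiPlus_mul_of_mem φ.2, ContinuousLinearMap.one_apply]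

theorem H_one (F : FourierL2) : H F (fun _ => (1 : ℂ)) = 0 := by
  refine ContinuousLinearMap.ext fun φ => Subtype.ext ?_
  rw [H_val, W0_one_apply, chiPlus_mul_reflect_of_mem φ.2]
  rfl

/-- The Widom identity `W(fg) = W(f)W(g) + H(f)H(g̃)`. -/
theorem widom_WW (F : FourierL2) {f g : ℝ → ℂ} (hf : MemLp f ⊤ (volume : Measure ℝ))
    (hg : MemLp g ⊤ (volume : Measure ℝ)) :
    W F f * W F g + H F f * H F (fun t => g (-t)) = W F (fun t => f t * g t) := by
  refine ContinuousLinearMap.ext fun φ => Subtype.ext ?_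
  simp only [ContinuousLinearMap.add_apply, ContinuousLinearMap.mul_apply, Submodule.coe_add,
    W_val, H_val]
  rw [W0_reflect_apply F hg (reflect (φ : L2)), reflect_reflect_apply, JPJ_apply,
    map_sub (W0 F f), map_sub (mul chiPlus), W0_comp_apply F hf hg,
    ← W0_comp_apply F hf hg (φ : L2)]
  abel

/-- The Widom identity `H(fg) = W(f)H(g) + H(f)W(g̃)`. -/
theorem widom_WH (F : FourierL2) {f g : ℝ → ℂ} (hf : MemLp f ⊤ (volume : Measure ℝ))
    (hg : MemLp g ⊤ (volume : Measure ℝ)) :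
    W F f * H F g + H F f * W F (fun t => g (-t)) = H F (fun t => f t * g t) := by
  refine ContinuousLinearMap.ext fun φ => Subtype.ext ?_
  simp only [ContinuousLinearMap.add_apply, ContinuousLinearMap.mul_apply, Submodule.coe_add,
    W_val, H_val]
  rw [W0_reflect_apply F hg (φ : L2), JPJ_apply,
    map_sub (W0 F f), map_sub (mul chiPlus), W0_comp_apply F hf hg,
    ← W0_comp_apply F hf hg (reflect (φ : L2))]
  abel

/-- The purely algebraic part of the inverse formula, in an abstract ring. -/
theorem ring_key {R : Type*} [Ring R]
    (Wa Hb Wb Ha Wc Hc Wd Wai Hai Ci Di G : R)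
    (e1 : Wb * Wc + Hb * Hc = Wa) (e2 : Wa * Hc + Ha * Wc = Hb)
    (e3 : Wa * Hai + Ha * Wai = 0) (e4 : Wb * Wai + Hb * Hai = Wd)
    (hc1 : Wc * Ci = 1) (hd1 : Wd * Di = 1)
    (hG : G = (1 - Hc) * (Ci * (Wai * Di)) + Hai * Di) :
    (Wa + Hb) * G = 1 := by
  have f1 : Wb * Wc = Wa - Hb * Hc := eq_sub_of_add_eq e1
  have f2 : Ha * Wc = Hb - Wa * Hc := eq_sub_of_add_eq' e2
  have f3 : Wa * Hai = -(Ha * Wai) := eq_neg_of_add_eq_zero_left e3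
  have f4 : Hb * Hai = Wd - Wb * Wai := eq_sub_of_add_eq' e4
  have eT1 : (Wa + Hb) * (1 - Hc) = (Wb + Ha) * Wc := by
    rw [add_mul Wb, f1, f2]
    noncomm_ring
  have eT2 : (Wa + Hb) * Hai = Wd - (Wb + Ha) * Wai := by
    rw [add_mul Wa, f3, f4]
    noncomm_ring
  rw [hG]
  calc (Wa + Hb) * ((1 - Hc) * (Ci * (Wai * Di)) + Hai * Di)
      = ((Wa + Hb) * (1 - Hc)) * Ci * (Wai * Di) + ((Wa + Hb) * Hai) * Di := by noncomm_ring
    _ = ((Wb + Ha) * Wc) * Ci * (Wai * Di) + (Wd - (Wb + Ha) * Wai) * Di := by rw [eT1, eT2]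
    _ = (Wb + Ha) * (Wc * Ci) * (Wai * Di) + (Wd * Di - (Wb + Ha) * (Wai * Di)) := by
        noncomm_ring
    _ = (Wb + Ha) * 1 * (Wai * Di) + (1 - (Wb + Ha) * (Wai * Di)) := by rw [hc1, hd1]
    _ = 1 := by noncomm_ring

end Aux

set_option maxHeartbeats 16000000 in
/-- If `(a,b)` is a matching pair with subordinated pair `(c,d)` and the Wiener-Hopf
operators `W(c)`, `W(d)` are invertible, then `W(a)+H(b)` is invertible with inverse
`(I - H(c̃)) W(c)⁻¹ W(ã⁻¹) W(d)⁻¹ + H(a⁻¹) W(d)⁻¹`. -/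
theorem invertible_of_matching
    (F : FourierL2) (a b c d : ℝ → ℂ) (hab : MatchingPair a b)
    (hc : c = fun t => a t * (b t)⁻¹) (hd : d = fun t => a t * (b (-t))⁻¹)
    (Ci Di : Lp2Plus →L[ℂ] Lp2Plus)
    (hc1 : (W F c).comp Ci = 1) (hc2 : Ci.comp (W F c) = 1)
    (hd1 : (W F d).comp Di = 1) (hd2 : Di.comp (W F d) = 1)
    (G : Lp2Plus →L[ℂ] Lp2Plus)
    (hG : G = ((1 : Lp2Plus →L[ℂ] Lp2Plus) - H F (fun t => c (-t))).comp
        (Ci.comp ((W F (fun t => (a (-t))⁻¹)).comp Di)) +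
      (H F (fun t => (a t)⁻¹)).comp Di) :
    (W F a + H F b).comp G = 1 ∧ G.comp (W F a + H F b) = 1 := by
  obtain ⟨⟨ha, ha0, hai⟩, ⟨hb, hb0, hbi⟩, hm⟩ := hab
  have ha0' : ∀ᵐ t : ℝ ∂(volume : Measure ℝ), a (-t) ≠ 0 :=
    ae_neg (p := fun t => a t ≠ 0) ha0
  have hb0' : ∀ᵐ t : ℝ ∂(volume : Measure ℝ), b (-t) ≠ 0 :=
    ae_neg (p := fun t => b t ≠ 0) hb0
  have hbir : MemLp (fun t => (b (-t))⁻¹) ⊤ (volume : Measure ℝ) := memℒp_top_reflect hbi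
  have hair : MemLp (fun t => (a (-t))⁻¹) ⊤ (volume : Measure ℝ) := memℒp_top_reflect hai
  have hca : MemLp c ⊤ (volume : Measure ℝ) := by
    rw [hc]; exact memℒp_top_mul ha hbi
  have hct : MemLp (fun t => c (-t)) ⊤ (volume : Measure ℝ) := memℒp_top_reflect hca
  -- the basic Widom-type relations
  have e1 : W F b * W F c + H F b * H F (fun t => c (-t)) = W F a := by
    have h := widom_WW F hb hca
    rwa [show W F (fun t => b t * c t) = W F a from W_congr F (by
      filter_upwards [hb0] with t ht
      rw [hc]
      field_simp)] at h
  have e2 : W F a * H F (fun t => c (-t)) + H F a * W F c = H F b := by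
    have h := widom_WH F ha hct
    rw [show (fun t : ℝ => c (- -t)) = c from funext fun t => by rw [neg_neg]] at h
    rwa [show H F (fun t => a t * c (-t)) = H F b from H_congr F (by
      filter_upwards [hm, hb0'] with t h1 h2
      rw [hc]
      field_simp
      linear_combination h1)] at h
  have e3 : W F a * H F (fun t => (a t)⁻¹) + H F a * W F (fun t => (a (-t))⁻¹) = 0 := by
    have h := widom_WH F ha hai
    rwa [show H F (fun t => a t * (a t)⁻¹) = 0 from (H_congr F (by
      filter_upwards [ha0] with t ht
      field_simp)).trans (H_one F)] at h
  have e4 : W F b * W F (fun t => (a (-t))⁻¹) + H F b * H F (fun t => (a t)⁻¹) = W F d := by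
    have h := widom_WW F hb hair
    rw [show (fun t : ℝ => (a (- -t))⁻¹) = (fun t => (a t)⁻¹) from
      funext fun t => by rw [neg_neg]] at h
    rwa [show W F (fun t => b t * (a (-t))⁻¹) = W F d from W_congr F (by
      filter_upwards [hm, ha0', hb0'] with t h1 h2 h3
      rw [hd]
      field_simp
      linear_combination -h1)] at h
  have hc1' : W F c * Ci = 1 := by rw [ContinuousLinearMap.mul_def]; exact hc1
  have hd1' : W F d * Di = 1 := by rw [ContinuousLinearMap.mul_def]; exact hd1
  have hG' : G = (1 - H F (fun t => c (-t))) * (Ci * (W F (fun t => (a (-t))⁻¹) * Di))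
      + H F (fun t => (a t)⁻¹) * Di := by
    rw [hG]
    simp only [← ContinuousLinearMap.mul_def]
  have key : (W F a + H F b) * G = 1 :=
    ring_key (W F a) (H F b) (W F b) (H F a) (W F c) (H F (fun t => c (-t))) (W F d)
      (W F (fun t => (a (-t))⁻¹)) (H F (fun t => (a t)⁻¹)) Ci Di G e1 e2 e3 e4 hc1' hd1' hG'
  have hTG : (W F a + H F b).comp G = 1 := by
    rw [← ContinuousLinearMap.mul_def]
    exact key
  -- injectivity of `W(a) + H(b)`
  have hinj : ∀ φ : Lp2Plus, (W F a + H F b) φ = 0 → φ = 0 := by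
    intro φ hφ
    have hPψ : mul chiPlus (W0 F a (φ : L2) + W0 F b (reflect (φ : L2))) = 0 := by
      have hval : (((W F a + H F b) φ : Lp2Plus) : L2)
          = mul chiPlus (W0 F a (φ : L2) + W0 F b (reflect (φ : L2))) := by
        simp only [ContinuousLinearMap.add_apply, Submodule.coe_add, W_val, H_val, map_add]
      rw [hφ] at hval
      simpa using hval.symm
    set ψ : L2 := W0 F a (φ : L2) + W0 F b (reflect (φ : L2)) with hψ_def
    -- step 1 : `W⁰(ã) ψ = W⁰(b) (Jψ)`
    have hstep1 : W0 F (fun t => a (-t)) ψ = W0 F b (reflect ψ) := by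
      have hrψ : reflect ψ = W0 F (fun t => a (-t)) (reflect (φ : L2))
          + W0 F (fun t => b (-t)) (φ : L2) := by
        rw [hψ_def, map_add, reflect_W0_apply F ha, reflect_W0_apply F hb, reflect_reflect_apply]
      rw [hψ_def, map_add, hrψ, map_add,
        W0_comp_apply F (memℒp_top_reflect ha) ha, W0_comp_apply F (memℒp_top_reflect ha) hb,
        W0_comp_apply F hb (memℒp_top_reflect ha), W0_comp_apply F hb (memℒp_top_reflect hb)]
      have g1 : W0 F (fun t => a (-t) * a t) = W0 F (fun t => b t * b (-t)) :=
        W0_congr F (by filter_upwards [hm] with t ht; rw [mul_comm]; exact ht)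
      have g2 : (fun t : ℝ => a (-t) * b t) = (fun t : ℝ => b t * a (-t)) :=
        funext fun t => mul_comm _ _
      rw [g1, g2, add_comm]
    -- step 2 : `W⁰(d) (Jψ) = ψ`
    have e5 : W0 F a (reflect ψ) = W0 F (fun t => b (-t)) ψ := by
      have e := congrArg reflect hstep1
      rw [reflect_W0_apply F (memℒp_top_reflect ha) ψ, reflect_W0_apply F hb (reflect ψ),
        reflect_reflect_apply ψ,
        show (fun t : ℝ => a (- -t)) = a from funext fun t => by rw [neg_neg]] at e
      exact e
    have hstep2 : W0 F d (reflect ψ) = ψ := by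
      have hbb : W0 F (fun t => (b (-t))⁻¹ * b (-t)) = W0 F (fun _ => (1 : ℂ)) :=
        W0_congr F (by
          filter_upwards [hb0'] with t ht
          exact inv_mul_cancel₀ ht)
      have h2 : W0 F (fun t => (b (-t))⁻¹) (W0 F a (reflect ψ)) = ψ := by
        rw [e5, W0_comp_apply F hbir (memℒp_top_reflect hb), hbb, W0_one_apply]
      have hd_eq : W0 F d = W0 F (fun t => (b (-t))⁻¹ * a t) :=
        W0_congr F (Eventually.of_forall fun t => by simp only [hd]; ring)
      rw [hd_eq, ← W0_comp_apply F hbir ha]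
      exact h2
    -- conclude `ψ = 0`
    have hmem : reflect ψ ∈ posSubspace := reflect_mem_of_chiPlus_eq_zero hPψ
    have hWd : W F d (⟨reflect ψ, hmem⟩ : Lp2Plus) = 0 := by
      apply Subtype.ext
      rw [W_val, hstep2]
      simpa using hPψ
    have hω0 : (⟨reflect ψ, hmem⟩ : Lp2Plus) = 0 := by
      have h := ContinuousLinearMap.ext_iff.mp hd2 (⟨reflect ψ, hmem⟩ : Lp2Plus)
      simp only [ContinuousLinearMap.comp_apply, ContinuousLinearMap.one_apply] at h
      rw [hWd, map_zero] at h
      exact h.symm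
    have hψ0 : ψ = 0 := by
      have hr : reflect ψ = 0 := by
        have := congrArg (Subtype.val) hω0
        simpa using this
      calc ψ = reflect (reflect ψ) := (reflect_reflect_apply ψ).symm
        _ = reflect 0 := by rw [hr]
        _ = 0 := map_zero reflect
    -- step 4 : `W(c) φ = 0`, hence `φ = 0`
    have h4 : W0 F b (reflect (φ : L2)) = - W0 F a (φ : L2) :=
      eq_neg_of_add_eq_zero_right (by rw [← hψ_def]; exact hψ0)
    have h5 : reflect (φ : L2) = - W0 F c (φ : L2) := by
      have hbb' : W0 F (fun t => (b t)⁻¹ * b t) = W0 F (fun _ => (1 : ℂ)) :=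
        W0_congr F (by
          filter_upwards [hb0] with t ht
          exact inv_mul_cancel₀ ht)
      have e6 : W0 F (fun t => (b t)⁻¹) (W0 F b (reflect (φ : L2))) = reflect (φ : L2) := by
        rw [W0_comp_apply F hbi hb, hbb', W0_one_apply]
      rw [h4, map_neg, W0_comp_apply F hbi ha,
        show W0 F (fun t => (b t)⁻¹ * a t) = W0 F c from
          W0_congr F (Eventually.of_forall fun t => by simp only [hc]; ring)] at e6
      exact e6.symm
    have hWc : W F c φ = 0 := by
      apply Subtype.ext
      have hz : mul chiPlus (reflect (φ : L2)) = 0 := chiPlus_mul_reflect_of_mem φ.2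
      rw [h5, map_neg] at hz
      rw [W_val]
      simpa using neg_eq_zero.mp hz
    have h := ContinuousLinearMap.ext_iff.mp hc2 φ
    simp only [ContinuousLinearMap.comp_apply, ContinuousLinearMap.one_apply] at h
    rw [hWc, map_zero] at h
    exact h.symm
  -- conclude the left inverse from the right inverse and injectivity
  refine ⟨hTG, ?_⟩
  refine ContinuousLinearMap.ext fun φ => ?_
  have h0 : (W F a + H F b) ((G.comp (W F a + H F b)) φ - φ) = 0 := by
    rw [map_sub]
    have h1 := ContinuousLinearMap.ext_iff.mp hTG ((W F a + H F b) φ)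
    simp only [ContinuousLinearMap.comp_apply, ContinuousLinearMap.one_apply] at h1 ⊢
    rw [h1, sub_self]
  have h2 := hinj _ h0
  rw [sub_eq_zero] at h2
  simpa using h2

end WienerHopf
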